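/- Let n ≥ 1, let s : ℝⁿ → ℝ be C^∞, let ℓ ≥ 1 be an integer, and suppose there is a C^∞ function A : ℝⁿ → ℝ such that ‖∇s(x)‖² = 1 + s(x)^ℓ · A(x) for all x, where ∇s is the gradient. Define s̄(x) := s(x) · (1 − s(x)^ℓ · A(x) / (2(ℓ+1))). Then there exists a C^∞ function A′ : ℝⁿ → ℝ such that ‖∇s̄(x)‖² = 1 + s(x)^(ℓ+1) · A′(x) for all x. -/

import Mathlib

open InnerProductSpace


/-- Flat-background instance of Lemma 2.4: if `s : ℝⁿ → ℝ` is `C^∞` with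
`‖∇s‖² = 1 + sˡ·A` for a smooth `A` and `ℓ ≥ 1`, then
`s̄ := s·(1 - sˡ·A/(2(ℓ+1)))` satisfies `‖∇s̄‖² = 1 + s^(ℓ+1)·A'` for some smooth `A'`. -/
theorem unit_defining_function_induction_step
    (n : ℕ) (hn : 1 ≤ n) (s : EuclideanSpace ℝ (Fin n) → ℝ)
    (hs : ContDiff ℝ (⊤ : ℕ∞) s) (ℓ : ℕ) (hℓ : 1 ≤ ℓ)
    (A : EuclideanSpace ℝ (Fin n) → ℝ) (hA : ContDiff ℝ (⊤ : ℕ∞) A)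
    (h : ∀ x, ‖gradient s x‖ ^ 2 = 1 + s x ^ ℓ * A x) :
    ∃ A' : EuclideanSpace ℝ (Fin n) → ℝ, ContDiff ℝ (⊤ : ℕ∞) A' ∧
      ∀ x, ‖gradient (fun z => s z * (1 - s z ^ ℓ * A z / (2 * ((ℓ : ℝ) + 1)))) x‖ ^ 2
        = 1 + s x ^ (ℓ + 1) * A' x := by
  obtain ⟨m, rfl⟩ : ∃ m, ℓ = m + 1 := ⟨ℓ - 1, (Nat.succ_pred_eq_of_pos hℓ).symm⟩
  have hds : Differentiable ℝ s := hs.differentiable (by simp)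
  have hdA : Differentiable ℝ A := hA.differentiable (by simp)
  have grad_smooth : ∀ f : EuclideanSpace ℝ (Fin n) → ℝ, ContDiff ℝ (⊤:ℕ∞) f → ContDiff ℝ (⊤:ℕ∞) (gradient f) := by
    intro f hf
    have : gradient f = fun x => (toDual ℝ (EuclideanSpace ℝ (Fin n))).symm (fderiv ℝ f x) := rfl
    rw [this]
    exact (toDual ℝ (EuclideanSpace ℝ (Fin n))).symm.contDiff.comp (hf.fderiv_right (by simp))
  have hgs : ContDiff ℝ (⊤:ℕ∞) (gradient s) := grad_smooth s hs
  have hgA : ContDiff ℝ (⊤:ℕ∞) (gradient A) := grad_smooth A hA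
  set c : ℝ := 2 * (((m : ℝ) + 1) + 1) with hc
  have hm2 : ((m : ℝ) + 2) ≠ 0 := by positivity
  have hc0 : c ≠ 0 := by rw [hc]; positivity
  set a : EuclideanSpace ℝ (Fin n) → ℝ := fun x => 1 - s x ^ (m+1) * A x / 2 with ha
  set b : EuclideanSpace ℝ (Fin n) → ℝ := fun x => -(s x ^ (m+2) / c) with hb
  set P : EuclideanSpace ℝ (Fin n) → ℝ := fun x => inner ℝ (gradient s x) (gradient A x) with hP
  set Q : EuclideanSpace ℝ (Fin n) → ℝ := fun x => inner ℝ (gradient A x) (gradient A x) with hQ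
  have hPd : ContDiff ℝ (⊤:ℕ∞) P := hgs.inner ℝ hgA
  have hQd : ContDiff ℝ (⊤:ℕ∞) Q := hgA.inner ℝ hgA
  refine ⟨fun x => s x ^ m * A x ^ 2 * (-3/4) + s x ^ (2*m+1) * A x ^ 3 / 4
      - (1 - s x ^ (m+1) * A x / 2) * P x / ((m:ℝ) + 2)
      + s x ^ (m+2) * Q x / (4 * ((m:ℝ) + 2)^2), ?_, ?_⟩
  · refine ContDiff.add (ContDiff.sub (ContDiff.add ?_ ?_) ?_) ?_
    · exact ((hs.pow m).mul (hA.pow 2)).mul contDiff_const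
    · exact (((hs.pow (2*m+1)).mul (hA.pow 3)).div_const 4)
    · exact (((contDiff_const.sub (((hs.pow (m+1)).mul hA).div_const 2)).mul hPd).div_const _)
    · exact (((hs.pow (m+2)).mul hQd).div_const _)
  · intro x
    have key : gradient (fun z => s z * (1 - s z ^ (m+1) * A z / (2 * (((m+1 : ℕ) : ℝ) + 1)))) x
        = a x • gradient s x + b x • gradient A x := by
      have h1 : HasFDerivAt s (fderiv ℝ s x) x := (hds x).hasFDerivAt
      have h2 : HasFDerivAt A (fderiv ℝ A x) x := (hdA x).hasFDerivAt
      have h3 : HasFDerivAt (fun z => s z * (1 - s z ^ (m+1) * A z / (2 * (((m+1 : ℕ) : ℝ) + 1))))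
          (a x • fderiv ℝ s x + b x • fderiv ℝ A x) x := by
        simp only [div_eq_mul_inv]
        have hpow : HasFDerivAt (fun z => s z ^ (m+1)) ((((m:ℝ)+1) * s x ^ m) • fderiv ℝ s x) x := by
          have := (hasDerivAt_pow (m+1) (s x)).comp_hasFDerivAt x h1
          simpa [Function.comp_def] using this
        have h4 := h1.mul (((hpow.mul h2).mul_const ((2 * (((m+1 : ℕ) : ℝ) + 1))⁻¹)).const_sub 1)
        refine h4.congr_fderiv ?_
        ext v
        simp only [ContinuousLinearMap.add_apply, ContinuousLinearMap.smul_apply,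
          ContinuousLinearMap.coe_smul', Pi.smul_apply, ContinuousLinearMap.neg_apply,
          ContinuousLinearMap.coe_sub', Pi.sub_apply,
          smul_eq_mul, Pi.mul_apply, ha, hb, hc]
        push_cast
        field_simp
        ring
      have h5 := h3.hasGradientAt
      rw [h5.gradient]
      simp only [map_add, map_smul]
      rfl
    rw [key, ← real_inner_self_eq_norm_sq, real_inner_add_add_self,
      real_inner_smul_left, real_inner_smul_left, real_inner_smul_left,
      real_inner_smul_right, real_inner_smul_right, real_inner_smul_right,
      real_inner_self_eq_norm_sq, h x]
    have hPx : inner ℝ (gradient s x) (gradient A x) = P x := rfl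
    have hQx : inner ℝ (gradient A x) (gradient A x) = Q x := rfl
    rw [hPx, hQx, ha, hb, hc]
    push_cast
    field_simp
    ring
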